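/- Let β > 0, γ > 0, α ≥ 0, δ ≥ 0 with 0 < α + δ < γ, and let x ≥ 0. Then the annuity value under Gompertz–Makeham mortality satisfies ā_x(α,β,γ,δ) = (1/(α+δ))·(1 − (β e^{γx}/γ)^{(α+δ)/γ} · e^{β e^{γx}/γ} · Γ(1 − (α+δ)/γ) · [1 − G(β e^{γx}/γ; 1 − (α+δ)/γ, 1)]), where Γ denotes the gamma function and G(·;η,1) the gamma distribution function with shape η and scale 1. -/

import Mathlib

open MeasureTheory

/-- Gompertz–Makeham survival function `l(x; α, β, γ) = exp(-αx - (β/γ)(e^{γx} - 1))`. -/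
noncomputable def survival (α β γ x : ℝ) : ℝ :=
  Real.exp (-α * x - β / γ * (Real.exp (γ * x) - 1))

/-- Present value of a continuously paid life-long annuity at age `x`:
`ā_x(α,β,γ,δ) = ∫₀^∞ e^{-δt} l(x+t)/l(x) dt`. -/
noncomputable def annuity (α β γ δ x : ℝ) : ℝ :=
  ∫ t in Set.Ioi (0 : ℝ), Real.exp (-δ * t) * (survival α β γ (x + t) / survival α β γ x)

/-- Gamma distribution function with shape `η` and scale 1:
`G(z; η, 1) = (1/Γ(η)) ∫₀^z y^{η-1} e^{-y} dy`. -/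
noncomputable def gammaCDF' (z η : ℝ) : ℝ :=
  (1 / Real.Gamma η) * ∫ y in (0:ℝ)..z, y ^ (η - 1) * Real.exp (-y)

open Set Filter

theorem annuity_eq_gamma_expression (α β γ δ x : ℝ)
    (hβ : 0 < β) (hγ : 0 < γ) (hα : 0 ≤ α) (hδ : 0 ≤ δ)
    (hαδ : 0 < α + δ) (hαδγ : α + δ < γ) (hx : 0 ≤ x) :
    annuity α β γ δ x =
      (1 / (α + δ)) *
        (1 - (β * Real.exp (γ * x) / γ) ^ ((α + δ) / γ) *
          Real.exp (β * Real.exp (γ * x) / γ) * Real.Gamma (1 - (α + δ) / γ) *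
          (1 - gammaCDF' (β * Real.exp (γ * x) / γ) (1 - (α + δ) / γ))) := by
  set s : ℝ := α + δ with hsdef
  set c : ℝ := β * Real.exp (γ * x) / γ with hcdef
  set η : ℝ := 1 - s / γ with hηdef
  have hc : 0 < c := by positivity
  have hη0 : 0 < η := by
    have h1 : s / γ < 1 := (div_lt_one hγ).mpr hαδγ
    rw [hηdef]; linarith
  have hγη : γ * η = γ - s := by rw [hηdef]; field_simp
  -- the two key integrands
  set g1 : ℝ → ℝ := fun t => Real.exp (-s*t - c*Real.exp (γ*t)) with hg1
  set g2 : ℝ → ℝ := fun t => Real.exp ((γ-s)*t - c*Real.exp (γ*t)) with hg2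
  -- Step A : annuity = exp c * ∫ g1
  have stepA : annuity α β γ δ x = Real.exp c * ∫ t in Ioi (0:ℝ), g1 t := by
    rw [annuity, ← MeasureTheory.integral_const_mul]
    apply setIntegral_congr_fun measurableSet_Ioi
    intro t _
    simp only [survival, hg1]
    rw [div_eq_mul_inv, ← Real.exp_neg, ← Real.exp_add, ← Real.exp_add, ← Real.exp_add]
    congr 1
    have hexp : Real.exp (γ * (x + t)) = Real.exp (γ*x) * Real.exp (γ*t) := by
      rw [← Real.exp_add]; ring_nf
    rw [hexp]
    field_simp [hcdef, hsdef]
    simp only [hsdef, hcdef]; field_simp; ring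
  -- integrability of g1
  have hmeas1 : AEStronglyMeasurable g1 (volume.restrict (Ioi (0:ℝ))) := by
    apply Continuous.aestronglyMeasurable; fun_prop
  have hint1 : IntegrableOn g1 (Ioi (0:ℝ)) := by
    apply Integrable.mono (exp_neg_integrableOn_Ioi 0 hαδ) hmeas1
    filter_upwards with t
    rw [Real.norm_eq_abs, Real.norm_eq_abs, abs_of_pos (Real.exp_pos _), abs_of_pos (Real.exp_pos _)]
    apply Real.exp_le_exp.mpr
    have := mul_pos hc (Real.exp_pos (γ*t))
    simp only [hsdef]; nlinarith
  -- change of variables machinery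
  set φ : ℝ → ℝ := fun t => c * Real.exp (γ*t) with hφ
  have hφderiv : ∀ t ∈ Ioi (0:ℝ), HasDerivWithinAt φ (c*γ*Real.exp (γ*t)) (Ioi (0:ℝ)) t := by
    intro t _
    have h1 : HasDerivAt (fun t : ℝ => γ*t) γ t := by simpa using (hasDerivAt_id t).const_mul γ
    have := (h1.exp).const_mul c
    exact (this.congr_deriv (by ring)).hasDerivWithinAt
  have hφinj : InjOn φ (Ioi (0:ℝ)) := by
    intro a _ b _ hab
    simp only [hφ] at hab
    have := mul_left_cancel₀ hc.ne' hab
    exact mul_left_cancel₀ hγ.ne' (Real.exp_injective this)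
  have hφimg : φ '' Ioi (0:ℝ) = Ioi c := by
    ext y
    simp only [hφ, Set.mem_image, Set.mem_Ioi]
    constructor
    · rintro ⟨t, ht, rfl⟩
      have h1 : 1 < Real.exp (γ*t) := Real.one_lt_exp_iff.mpr (by positivity)
      nlinarith
    · intro hy
      refine ⟨Real.log (y/c) / γ, ?_, ?_⟩
      · have h1 : 1 < y / c := (one_lt_div hc).mpr hy
        have h2 := Real.log_pos h1
        exact Set.mem_Ioi.mpr (div_pos h2 hγ)
      · rw [mul_div_cancel₀ _ hγ.ne', Real.exp_log (div_pos (hc.trans hy) hc)]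
        field_simp
  set G : ℝ → ℝ := fun y => y ^ (η - 1) * Real.exp (-y) with hG
  have hGint : IntegrableOn G (Ioi c) := by
    have := (Real.GammaIntegral_convergent hη0).mono_set (Ioi_subset_Ioi hc.le)
    exact this.congr_fun (fun y _ => by simp [hG, mul_comm]) measurableSet_Ioi
  -- pointwise simplification of the substituted integrand
  have hpt : ∀ t ∈ Ioi (0:ℝ), |c*γ*Real.exp (γ*t)| • G (φ t) = (γ * c^η) * g2 t := by
    intro t _
    have he : (0:ℝ) < Real.exp (γ*t) := Real.exp_pos _
    rw [smul_eq_mul, abs_of_pos (by positivity)]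
    simp only [hG, hφ, hg2]
    have hcc : c ^ η = c * c ^ (η-1) := by
      have h := Real.rpow_add hc 1 (η-1)
      rw [Real.rpow_one, show (1:ℝ)+(η-1) = η by ring] at h
      exact h
    have e1 : Real.exp (γ*t) * Real.exp (γ*t*(η-1)) = Real.exp ((γ-s)*t) := by
      rw [← Real.exp_add]; congr 1; linear_combination t*hγη
    rw [Real.mul_rpow hc.le he.le, ← Real.exp_mul, sub_eq_add_neg ((γ-s)*t), Real.exp_add,
      ← e1, hcc]
    ring
  -- substitution
  have hsubst : ∫ y in Ioi c, G y = (γ * c^η) * ∫ t in Ioi (0:ℝ), g2 t := by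
    have h := integral_image_eq_integral_abs_deriv_smul measurableSet_Ioi hφderiv hφinj G
    rw [hφimg] at h
    rw [h, ← MeasureTheory.integral_const_mul]
    exact setIntegral_congr_fun measurableSet_Ioi hpt
  have hint2 : IntegrableOn g2 (Ioi (0:ℝ)) := by
    have h := integrableOn_image_iff_integrableOn_abs_deriv_smul measurableSet_Ioi hφderiv hφinj G
    rw [hφimg] at h
    have h2 := (h.mp hGint).congr_fun hpt measurableSet_Ioi
    have hpos : (0:ℝ) < γ * c^η := by positivity
    have h3 := h2.const_mul (γ*c^η)⁻¹
    exact MeasureTheory.IntegrableOn.congr_fun h3 (fun t _ => by field_simp) measurableSet_Ioi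
  -- FTC part
  have hf0 : ∀ t : ℝ, HasDerivAt g1 (-s * g1 t - c*γ * g2 t) t := by
    intro t
    have h1 : HasDerivAt (fun t : ℝ => γ*t) γ t := by simpa using (hasDerivAt_id t).const_mul γ
    have h3 : HasDerivAt (fun t : ℝ => -s*t - c*Real.exp (γ*t)) (-s - c*(γ*Real.exp (γ*t))) t := by
      have := ((hasDerivAt_id t).const_mul (-s)).sub ((h1.exp).const_mul c)
      exact this.congr_deriv (by ring)
    have h4 := h3.exp
    rw [hg1]
    apply h4.congr_deriv
    have e2 : Real.exp ((γ-s)*t - c*Real.exp (γ*t))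
        = Real.exp (γ*t) * Real.exp (-s*t - c*Real.exp (γ*t)) := by
      rw [← Real.exp_add]; ring_nf
    simp only [hg1, hg2]
    rw [e2]; ring
  have htend : Filter.Tendsto g1 atTop (nhds 0) := by
    rw [hg1]
    apply Real.tendsto_exp_atBot.comp
    apply Filter.tendsto_atBot_mono (f := fun t => -(s*t))
    · intro t
      nlinarith [Real.exp_pos (γ*t), mul_pos hc (Real.exp_pos (γ*t))]
    · exact tendsto_neg_atBot_iff.mpr (Filter.Tendsto.const_mul_atTop hαδ tendsto_id)
  have hintd : IntegrableOn (fun t => -s * g1 t - c*γ * g2 t) (Ioi (0:ℝ)) :=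
    (hint1.const_mul (-s)).sub (hint2.const_mul (c*γ))
  have hftc : ∫ t in Ioi (0:ℝ), (-s * g1 t - c*γ*g2 t) = 0 - Real.exp (-c) := by
    have h := integral_Ioi_of_hasDerivAt_of_tendsto' (a := 0)
      (fun t _ => hf0 t) hintd htend
    rw [h]; congr 1
    simp [hg1]
  have hIsplit : ∫ t in Ioi (0:ℝ), (-s * g1 t - c*γ*g2 t)
      = -s * (∫ t in Ioi (0:ℝ), g1 t) - c*γ * (∫ t in Ioi (0:ℝ), g2 t) := by
    rw [integral_sub (hint1.const_mul (-s)) (hint2.const_mul (c*γ)),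
        MeasureTheory.integral_const_mul, MeasureTheory.integral_const_mul]
  -- gamma side
  have hΓ : Real.Gamma η = ∫ y in Ioi (0:ℝ), G y := by
    rw [Real.Gamma_eq_integral hη0]
    exact setIntegral_congr_fun measurableSet_Ioi (fun y _ => by simp [hG, mul_comm])
  have hIoc : IntegrableOn G (Ioc 0 c) := by
    have := (Real.GammaIntegral_convergent hη0).mono_set (Set.Ioc_subset_Ioi_self (a := c) (b := (0:ℝ)))
    exact this.congr_fun (fun y _ => by simp [hG, mul_comm]) measurableSet_Ioc
  have hsplit : ∫ y in Ioi (0:ℝ), G y = (∫ y in Ioc 0 c, G y) + ∫ y in Ioi c, G y := by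
    rw [← setIntegral_union (Set.Ioc_disjoint_Ioi le_rfl) measurableSet_Ioi hIoc hGint,
        Set.Ioc_union_Ioi_eq_Ioi hc.le]
  have hΓpos := Real.Gamma_pos_of_pos hη0
  have hcdf : Real.Gamma η * gammaCDF' c η = ∫ y in Ioc 0 c, G y := by
    rw [gammaCDF', intervalIntegral.integral_of_le hc.le]
    field_simp; rfl
  have hGammaSplit : Real.Gamma η * (1 - gammaCDF' c η) = ∫ y in Ioi c, G y := by
    rw [mul_sub, mul_one, hcdf, hΓ, hsplit]; ring
  -- assembly
  set I1 : ℝ := ∫ t in Ioi (0:ℝ), g1 t with hI1def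
  set I2 : ℝ := ∫ t in Ioi (0:ℝ), g2 t with hI2def
  have key : -s * I1 - c*γ*I2 = 0 - Real.exp (-c) := by rw [← hIsplit, hftc]
  have hpow : c ^ (s/γ) * c ^ η = c := by
    rw [← Real.rpow_add hc, show s/γ + η = 1 by rw [hηdef]; ring, Real.rpow_one]
  have hec : Real.exp c * Real.exp (-c) = 1 := by rw [← Real.exp_add]; simp
  rw [stepA, mul_assoc, hGammaSplit, hsubst]
  have hI1 : I1 = (Real.exp (-c) - c*γ*I2)/s := by
    field_simp
    linarith [key]
  rw [hI1]
  linear_combination (1/s) * hec + (γ * Real.exp c * I2 / s) * hpow
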